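/- Let δ > 0, χ > 0, c₁ > 0, c₂ > 0 and let Δ ∈ ℝ. Let V, r, s be independent random variables with V uniformly distributed on [−δ, δ] and r, s each uniformly distributed on [0, 1]. Define the new velocity V′ = χ·V + (c₁·r + c₂·s)·Δ and the new potential contribution φ′ = |V′| + |Δ − V′|. Then ℙ(φ′ ≥ δ) ≥ (1 − 1/(2χ)) · (1/2). -/

import Mathlib

open MeasureTheory ProbabilityTheory

/-- The uniform probability measure on the interval `[a, b]`. -/
noncomputable def uniformIcc (a b : ℝ) : Measure ℝ :=
  (ENNReal.ofReal (b - a))⁻¹ • volume.restrict (Set.Icc a b)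

/-- Lemma 4 of the paper: with `V` uniform on `[-δ, δ]` and `r, s` uniform on `[0, 1]`,
all independent, the new velocity `V' = χ·V + (c₁·r + c₂·s)·Δ` and new potential
contribution `φ' = |V'| + |Δ - V'|` satisfy `ℙ(φ' ≥ δ) ≥ (1 - 1/(2χ))·(1/2)`. -/
theorem stmt4 {Ω : Type*} [MeasurableSpace Ω] (P : Measure Ω) [IsProbabilityMeasure P]
    (δ χ c₁ c₂ Δ : ℝ) (hδ : 0 < δ) (hχ : 0 < χ) (hc₁ : 0 < c₁) (hc₂ : 0 < c₂)
    (V r s : Ω → ℝ) (hVmeas : Measurable V) (hrmeas : Measurable r) (hsmeas : Measurable s)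
    (hindep : iIndepFun ![V, r, s] P)
    (hVunif : Measure.map V P = uniformIcc (-δ) δ)
    (hrunif : Measure.map r P = uniformIcc 0 1)
    (hsunif : Measure.map s P = uniformIcc 0 1) :
    (1 - 1 / (2 * χ)) * (1 / 2) ≤
      (P {ω | δ ≤ |χ * V ω + (c₁ * r ω + c₂ * s ω) * Δ| +
        |Δ - (χ * V ω + (c₁ * r ω + c₂ * s ω) * Δ)|}).toReal := by
  classical
  set W : Ω → ℝ := fun ω => 2 * ((c₁ * r ω + c₂ * s ω) * Δ) - Δ with hWdef
  have hWmeas : Measurable W := by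
    apply Measurable.sub _ measurable_const
    exact (measurable_const.mul (((measurable_const.mul hrmeas).add
      (measurable_const.mul hsmeas)).mul measurable_const))
  set O : Set Ω := {ω | δ ≤ |χ * V ω + (c₁ * r ω + c₂ * s ω) * Δ| +
        |Δ - (χ * V ω + (c₁ * r ω + c₂ * s ω) * Δ)|} with hOdef
  have hV'meas : Measurable (fun ω => χ * V ω + (c₁ * r ω + c₂ * s ω) * Δ) := by
    exact (measurable_const.mul hVmeas).add (((measurable_const.mul hrmeas).add
      (measurable_const.mul hsmeas)).mul measurable_const)
  have hOmeas : MeasurableSet O :=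
    measurableSet_le measurable_const ((hV'meas.abs).add
      ((measurable_const.sub hV'meas).abs))
  -- independence of V and W
  have h1 : IndepFun (fun ω => (r ω, s ω)) V P := by
    have := hindep.indepFun_prodMk (f := ![V, r, s]) (fun i => by
      fin_cases i <;> simpa) 1 2 0 (by decide) (by decide)
    simpa using this
  have hVW : IndepFun V W P := by
    have h2 : IndepFun ((fun p : ℝ × ℝ => 2 * ((c₁ * p.1 + c₂ * p.2) * Δ) - Δ) ∘
        (fun ω => (r ω, s ω))) (id ∘ V) P := by
      apply h1.comp _ measurable_id
      exact (measurable_const.mul (((measurable_const.mul measurable_fst).add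
        (measurable_const.mul measurable_snd)).mul measurable_const)).sub measurable_const
    exact h2.symm
  have hprod : P.map (fun ω => (V ω, W ω)) = (P.map V).prod (P.map W) :=
    (indepFun_iff_map_prod_eq_prod_map_map hVmeas.aemeasurable hWmeas.aemeasurable).mp hVW
  haveI : IsProbabilityMeasure (P.map V) := Measure.isProbabilityMeasure_map hVmeas.aemeasurable
  haveI : IsProbabilityMeasure (P.map W) := Measure.isProbabilityMeasure_map hWmeas.aemeasurable
  -- the bad set
  set S : Set (ℝ × ℝ) := {p : ℝ × ℝ | |2 * χ * p.1 + p.2| < δ} with hSdef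
  have hSmeas : MeasurableSet S :=
    measurableSet_lt (((measurable_const.mul measurable_fst).add measurable_snd).abs)
      measurable_const
  have hsub : Oᶜ ⊆ (fun ω => (V ω, W ω)) ⁻¹' S := by
    intro ω hω
    simp only [Set.mem_compl_iff, hOdef, Set.mem_setOf_eq, not_le] at hω
    have key : 2 * χ * V ω + W ω =
        (χ * V ω + (c₁ * r ω + c₂ * s ω) * Δ) -
        (Δ - (χ * V ω + (c₁ * r ω + c₂ * s ω) * Δ)) := by
      simp only [hWdef]; ring
    simp only [Set.mem_preimage, hSdef, Set.mem_setOf_eq, key]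
    calc |(χ * V ω + (c₁ * r ω + c₂ * s ω) * Δ) -
          (Δ - (χ * V ω + (c₁ * r ω + c₂ * s ω) * Δ))|
        ≤ |χ * V ω + (c₁ * r ω + c₂ * s ω) * Δ| +
          |Δ - (χ * V ω + (c₁ * r ω + c₂ * s ω) * Δ)| := abs_sub _ _
      _ < δ := hω
  -- bounding the bad probability
  have hinner : ∀ w : ℝ, (P.map V) ((fun v => (v, w)) ⁻¹' S) ≤ ENNReal.ofReal (1 / (2 * χ)) := by
    intro w
    have hpre : (fun v => (v, w)) ⁻¹' S = {v : ℝ | |2 * χ * v + w| < δ} := rfl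
    have hss : {v : ℝ | |2 * χ * v + w| < δ} ∩ Set.Icc (-δ) δ ⊆
        Set.Ioo ((-δ - w) / (2 * χ)) ((δ - w) / (2 * χ)) := by
      intro v hv
      have hv' := hv.1
      rw [Set.mem_setOf_eq, abs_lt] at hv'
      have h2χ : (0:ℝ) < 2 * χ := by linarith
      constructor
      · rw [div_lt_iff₀ h2χ]; nlinarith [hv'.1]
      · rw [lt_div_iff₀ h2χ]; nlinarith [hv'.2]
    rw [hVunif]
    simp only [uniformIcc, Measure.smul_apply, smul_eq_mul]
    rw [hpre, Measure.restrict_apply' measurableSet_Icc]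
    calc (ENNReal.ofReal (δ - -δ))⁻¹ * volume ({v : ℝ | |2 * χ * v + w| < δ} ∩ Set.Icc (-δ) δ)
        ≤ (ENNReal.ofReal (δ - -δ))⁻¹ *
          volume (Set.Ioo ((-δ - w) / (2 * χ)) ((δ - w) / (2 * χ))) := by
          gcongr
          
      _ = ENNReal.ofReal (1 / (2 * χ)) := by
          rw [Real.volume_Ioo]
          have h1 : δ - -δ = 2 * δ := by ring
          have h2 : (δ - w) / (2 * χ) - (-δ - w) / (2 * χ) = δ / χ := by
            field_simp; ring
          rw [h1, h2, ← ENNReal.ofReal_inv_of_pos (by linarith), ← ENNReal.ofReal_mul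
            (by positivity)]
          have h3 : (2 * δ)⁻¹ * (δ / χ) = 1 / (2 * χ) := by
            field_simp
          rw [h3]
  have hbad : P Oᶜ ≤ ENNReal.ofReal (1 / (2 * χ)) := by
    calc P Oᶜ ≤ P ((fun ω => (V ω, W ω)) ⁻¹' S) := measure_mono hsub
      _ = (P.map (fun ω => (V ω, W ω))) S := by
          rw [Measure.map_apply (hVmeas.prodMk hWmeas) hSmeas]
      _ = ((P.map V).prod (P.map W)) S := by rw [hprod]
      _ = ∫⁻ w, (P.map V) ((fun v => (v, w)) ⁻¹' S) ∂(P.map W) :=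
          Measure.prod_apply_symm hSmeas
      _ ≤ ∫⁻ _, ENNReal.ofReal (1 / (2 * χ)) ∂(P.map W) := lintegral_mono hinner
      _ = ENNReal.ofReal (1 / (2 * χ)) := by
          rw [lintegral_const, measure_univ, mul_one]
  -- conclude
  have hsum : (P O).toReal + (P Oᶜ).toReal = 1 := by
    have h0 := measure_add_measure_compl (μ := P) hOmeas
    rw [measure_univ] at h0
    rw [← ENNReal.toReal_add (measure_ne_top P O) (measure_ne_top P Oᶜ), h0, ENNReal.toReal_one]
  have hbad' : (P Oᶜ).toReal ≤ 1 / (2 * χ) :=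
    ENNReal.toReal_le_of_le_ofReal (by positivity) hbad
  have hle1 : (P Oᶜ).toReal ≤ 1 :=
    ENNReal.toReal_le_of_le_ofReal zero_le_one (by rw [ENNReal.ofReal_one]; exact prob_le_one)
  rcases le_or_gt (1 / (2 * χ)) 1 with h | h
  · nlinarith
  · nlinarith
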